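/- Let s ∈ (0,1), a < b with a,b ≥ 0, f twice continuously differentiable with |f''| s-convex in the second sense on [a,b]. Set M(s) = 1/(s+3), N(s) = 1/(s+1) − 2/(s+2) + 1/(s+3). Then |(1/(b−a)) ∫_a^b f(t) dt − f((a+b)/2)| ≤ ((b−a)²/8)·[ 2 M(s) |f''((a+b)/2)| + N(s)(|f''(a)| + |f''(b)|) ] ≤ ((b−a)²/8)·(2^{1−s} M(s) + N(s))·(|f''(a)| + |f''(b)|). -/

import Mathlib

open intervalIntegral MeasureTheory Real Set

lemma contJ (p : ℝ) (hp : 0 < p) : Continuous (fun u : ℝ => u ^ p) := by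
  rw [continuous_iff_continuousAt]
  exact fun x => Real.continuousAt_rpow_const x p (Or.inr hp.le)

lemma rpow_two' {x : ℝ} : x ^ (2:ℝ) = x ^ 2 := by
  rw [show (2:ℝ) = ((2:ℕ):ℝ) by norm_num, Real.rpow_natCast]

lemma intJ1 {c s : ℝ} (hs : 0 < s) :
    ∫ u in (0:ℝ)..c, u ^ (s+2) = c ^ (s+3) / (s+3) := by
  rw [integral_rpow (Or.inl (by linarith))]
  rw [show s + 2 + 1 = s + 3 by ring, Real.zero_rpow (by linarith)]
  ring

lemma intJ2 {c s : ℝ} (hc : 0 < c) (hs : 0 < s) :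
    ∫ u in (0:ℝ)..c, (c-u)^2 * u ^ s
      = c ^ (s+3) * (1/(s+1) - 2/(s+2) + 1/(s+3)) := by
  have h1 : ∫ u in (0:ℝ)..c, (c-u)^2 * u ^ s
      = ∫ u in (0:ℝ)..c, (c^2 * u ^ s - 2*c*u^(s+1) + u^(s+2)) := by
    apply integral_congr
    intro u hu
    rw [Set.uIcc_of_le hc.le] at hu
    simp only
    rcases eq_or_lt_of_le hu.1 with h | h
    · simp [← h, Real.zero_rpow hs.ne', Real.zero_rpow (by linarith : s+1 ≠ 0),
        Real.zero_rpow (by linarith : s+2 ≠ 0)]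
    · have hu1 : u^(s+1) = u^s * u := by rw [Real.rpow_add h, Real.rpow_one]
      have hu2 : u^(s+2) = u^s * u^2 := by rw [Real.rpow_add h, rpow_two']
      rw [hu1, hu2]; ring
  rw [h1]
  have i1 : IntervalIntegrable (fun u : ℝ => c^2 * u ^ s) volume 0 c :=
    (intervalIntegrable_rpow' (by linarith)).const_mul _
  have i2 : IntervalIntegrable (fun u : ℝ => 2*c*u ^ (s+1)) volume 0 c :=
    (intervalIntegrable_rpow' (by linarith)).const_mul _
  have i3 : IntervalIntegrable (fun u : ℝ => u ^ (s+2)) volume 0 c :=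
    intervalIntegrable_rpow' (by linarith)
  rw [integral_add (i1.sub i2) i3, integral_sub i1 i2, intervalIntegral.integral_const_mul,
    intervalIntegral.integral_const_mul, integral_rpow (Or.inl (by linarith : (-1:ℝ) < s)),
    integral_rpow (Or.inl (by linarith : (-1:ℝ) < s+1)),
    integral_rpow (Or.inl (by linarith : (-1:ℝ) < s+2))]
  rw [Real.zero_rpow (by linarith : s+1 ≠ 0), Real.zero_rpow (by linarith : s+1+1 ≠ 0),
    Real.zero_rpow (by linarith : s+2+1 ≠ 0)]
  have e1 : c ^ (s+3) = c^2 * c^(s+1) := by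
    have h := Real.rpow_add hc 2 (s+1)
    rw [rpow_two'] at h
    rw [show s+3 = 2+(s+1) by ring, h]
  have e2 : c ^ (s+3) = c * c^(s+2) := by
    have h := Real.rpow_add hc 1 (s+2)
    rw [Real.rpow_one] at h
    rw [show s+3 = 1+(s+2) by ring, h]
  rw [show s+1+1 = s+2 by ring, show s+2+1 = s+3 by ring]
  calc c ^ 2 * ((c ^ (s + 1) - 0) / (s + 1)) - 2 * c * ((c ^ (s + 2) - 0) / (s + 2))
        + (c ^ (s + 3) - 0) / (s + 3)
      = (c^2*c^(s+1))/(s+1) - 2*(c*c^(s+2))/(s+2) + c^(s+3)/(s+3) := by ring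
    _ = c^(s+3)/(s+1) - 2*c^(s+3)/(s+2) + c^(s+3)/(s+3) := by rw [← e1, ← e2]
    _ = c^(s+3) * (1/(s+1) - 2/(s+2) + 1/(s+3)) := by ring

lemma intJ2' {c s : ℝ} (hc : 0 < c) (hs : 0 < s) :
    ∫ u in (0:ℝ)..c, u^2 * (c-u) ^ s
      = c ^ (s+3) * (1/(s+1) - 2/(s+2) + 1/(s+3)) := by
  have h : ∫ u in (0:ℝ)..c, u^2 * (c-u) ^ s
      = ∫ u in (0:ℝ)..c, (fun v => (c-v)^2 * v ^ s) (c - u) := by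
    apply integral_congr
    intro u _
    simp only
    rw [show c - (c - u) = u by ring]
  rw [h, integral_comp_sub_left (fun v => (c-v)^2 * v ^ s) c, sub_self, sub_zero]
  exact intJ2 hc hs

lemma ibp_left {f : ℝ → ℝ} {p q : ℝ}
    (hd1 : ∀ x ∈ Set.uIcc p q, HasDerivAt f (deriv f x) x)
    (hd2 : ∀ x ∈ Set.uIcc p q, HasDerivAt (deriv f) (deriv (deriv f) x) x)
    (hi1 : IntervalIntegrable (deriv f) volume p q)
    (hi2 : IntervalIntegrable (deriv (deriv f)) volume p q) :
    ∫ t in p..q, (t-p)^2/2 * deriv (deriv f) t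
      = (q-p)^2/2 * deriv f q - (q-p) * f q + ∫ t in p..q, f t := by
  have hu : ∀ x ∈ Set.uIcc p q, HasDerivAt (fun t => (t-p)^2/2) (x - p) x := by
    intro x _
    have h := (((hasDerivAt_id x).sub_const p).pow 2).div_const 2
    refine h.congr_deriv ?_
    simp
  have hu2 : ∀ x ∈ Set.uIcc p q, HasDerivAt (fun t => t - p) (1:ℝ) x :=
    fun x _ => (hasDerivAt_id x).sub_const p
  have s1 := integral_mul_deriv_eq_deriv_mul hu hd2
    (((continuous_id.sub continuous_const)).intervalIntegrable p q) hi2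
  have s2 := integral_mul_deriv_eq_deriv_mul hu2 hd1
    (continuous_const.intervalIntegrable p q) hi1
  simp only [sub_self] at s1 s2
  rw [s1, s2]
  simp only [one_mul]
  ring

lemma ibp_right {f : ℝ → ℝ} {p q : ℝ}
    (hd1 : ∀ x ∈ Set.uIcc p q, HasDerivAt f (deriv f x) x)
    (hd2 : ∀ x ∈ Set.uIcc p q, HasDerivAt (deriv f) (deriv (deriv f) x) x)
    (hi1 : IntervalIntegrable (deriv f) volume p q)
    (hi2 : IntervalIntegrable (deriv (deriv f)) volume p q) :
    ∫ t in p..q, (q-t)^2/2 * deriv (deriv f) t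
      = -((q-p)^2/2) * deriv f p - (q-p) * f p + ∫ t in p..q, f t := by
  have hu : ∀ x ∈ Set.uIcc p q, HasDerivAt (fun t => (q-t)^2/2) (x - q) x := by
    intro x _
    have h := (((hasDerivAt_id x).const_sub q).pow 2).div_const 2
    refine h.congr_deriv ?_
    simp; ring
  have hu2 : ∀ x ∈ Set.uIcc p q, HasDerivAt (fun t => q - t) (-1:ℝ) x :=
    fun x _ => (hasDerivAt_id x).const_sub q
  have s1 := integral_mul_deriv_eq_deriv_mul hu hd2
    ((continuous_id.sub continuous_const).intervalIntegrable p q) hi2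
  have s2 := integral_mul_deriv_eq_deriv_mul hu2 hd1
    (continuous_const.intervalIntegrable p q) hi1
  have hneg : (∫ x in p..q, (x - q) * deriv f x)
      = - ∫ x in p..q, (q - x) * deriv f x := by
    rw [← intervalIntegral.integral_neg]
    apply integral_congr
    intro x _
    simp only
    ring
  simp only [sub_self] at s1 s2
  rw [s1, hneg, s2]
  simp only [neg_one_mul, intervalIntegral.integral_neg]
  ring

set_option maxHeartbeats 1000000 in
theorem stmt_16 (f : ℝ → ℝ) (a b : ℝ) (s : ℝ) (hs : s ∈ Set.Ioo (0:ℝ) 1)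
    (ha : 0 ≤ a) (hb : 0 ≤ b) (hab : a < b)
    (U : Set ℝ) (hU : IsOpen U) (hsub : Set.Icc a b ⊆ U) (hf : ContDiffOn ℝ 2 f U)
    (hsc : ∀ u ∈ Set.Icc a b, ∀ v ∈ Set.Icc a b, ∀ l ∈ Set.Icc (0:ℝ) 1,
      |deriv (deriv f) (l*u + (1-l)*v)| ≤
        l ^ s * |deriv (deriv f) u| + (1-l) ^ s * |deriv (deriv f) v|) :
    |(1/(b-a)) * (∫ t in a..b, f t) - f ((a+b)/2)|
      ≤ ((b-a)^2/8) * (2 * (1/(s+3)) * |deriv (deriv f) ((a+b)/2)|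
          + (1/(s+1) - 2/(s+2) + 1/(s+3)) * (|deriv (deriv f) a| + |deriv (deriv f) b|)) ∧
    ((b-a)^2/8) * (2 * (1/(s+3)) * |deriv (deriv f) ((a+b)/2)|
          + (1/(s+1) - 2/(s+2) + 1/(s+3)) * (|deriv (deriv f) a| + |deriv (deriv f) b|))
      ≤ ((b-a)^2/8) * ((2:ℝ) ^ (1-s) * (1/(s+3)) + (1/(s+1) - 2/(s+2) + 1/(s+3)))
          * (|deriv (deriv f) a| + |deriv (deriv f) b|) := by
  obtain ⟨hs0, hs1⟩ := hs
  set g2 : ℝ → ℝ := deriv (deriv f) with hg2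
  set m : ℝ := (a+b)/2 with hm
  set c : ℝ := (b-a)/2 with hc
  have hc0 : 0 < c := by rw [hc]; linarith
  have ham : a < m := by rw [hm]; linarith
  have hmb : m < b := by rw [hm]; linarith
  have hmI : m ∈ Set.Icc a b := ⟨ham.le, hmb.le⟩
  have haI : a ∈ Set.Icc a b := ⟨le_rfl, hab.le⟩
  have hbI : b ∈ Set.Icc a b := ⟨hab.le, le_rfl⟩
  set A : ℝ := |g2 a| with hA
  set B : ℝ := |g2 b| with hB
  set Am : ℝ := |g2 m| with hAm
  set N : ℝ := 1/(s+1) - 2/(s+2) + 1/(s+3) with hNdef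
  have hA0 : 0 ≤ A := abs_nonneg _
  have hB0 : 0 ≤ B := abs_nonneg _
  have hAm0 : 0 ≤ Am := abs_nonneg _
  have hM0 : 0 ≤ 1/(s+3) := by apply one_div_nonneg.mpr; linarith
  have hN0 : 0 ≤ N := by
    have : N = 2/((s+1)*(s+2)*(s+3)) := by rw [hNdef]; field_simp; ring
    rw [this]
    apply div_nonneg (by norm_num)
    nlinarith [mul_pos (mul_pos (by linarith : (0:ℝ) < s+1) (by linarith : (0:ℝ) < s+2))
      (by linarith : (0:ℝ) < s+3)]
  -- derivative facts
  have hfd : DifferentiableOn ℝ f U := hf.differentiableOn (by norm_num)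
  have hf1 : ContDiffOn ℝ 1 (deriv f) U := hf.deriv_of_isOpen hU (by norm_num)
  have hf1d : DifferentiableOn ℝ (deriv f) U := hf1.differentiableOn (by norm_num)
  have hcont2 : ContinuousOn g2 U :=
    (hf1.deriv_of_isOpen (m := 0) hU (by norm_num)).continuousOn
  have hd1 : ∀ x ∈ Set.Icc a b, HasDerivAt f (deriv f x) x := fun x hx =>
    (hfd.differentiableAt (hU.mem_nhds (hsub hx))).hasDerivAt
  have hd2 : ∀ x ∈ Set.Icc a b, HasDerivAt (deriv f) (g2 x) x := fun x hx =>
    (hf1d.differentiableAt (hU.mem_nhds (hsub hx))).hasDerivAt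
  have hsl : Set.uIcc a m ⊆ Set.Icc a b := by
    rw [Set.uIcc_of_le ham.le]; exact Set.Icc_subset_Icc le_rfl hmb.le
  have hsr : Set.uIcc m b ⊆ Set.Icc a b := by
    rw [Set.uIcc_of_le hmb.le]; exact Set.Icc_subset_Icc ham.le le_rfl
  have intf : ∀ {p q : ℝ}, Set.uIcc p q ⊆ Set.Icc a b → IntervalIntegrable f volume p q :=
    fun h => ((hf.continuousOn).mono (h.trans hsub)).intervalIntegrable
  have int1 : ∀ {p q : ℝ}, Set.uIcc p q ⊆ Set.Icc a b →
      IntervalIntegrable (deriv f) volume p q :=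
    fun h => ((hf1.continuousOn).mono (h.trans hsub)).intervalIntegrable
  have int2 : ∀ {p q : ℝ}, Set.uIcc p q ⊆ Set.Icc a b →
      IntervalIntegrable g2 volume p q :=
    fun h => (hcont2.mono (h.trans hsub)).intervalIntegrable
  -- key identity
  have E1 := ibp_left (f := f) (p := a) (q := m)
    (fun x hx => hd1 x (hsl hx)) (fun x hx => hd2 x (hsl hx)) (int1 hsl) (int2 hsl)
  have E2 := ibp_right (f := f) (p := m) (q := b)
    (fun x hx => hd1 x (hsr hx)) (fun x hx => hd2 x (hsr hx)) (int1 hsr) (int2 hsr)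
  have hadd := integral_add_adjacent_intervals (intf hsl) (intf hsr)
  have hKey : (∫ t in a..m, (t-a)^2/2 * g2 t) + (∫ t in m..b, (b-t)^2/2 * g2 t)
      = (∫ t in a..b, f t) - (b-a) * f m := by
    rw [← hg2] at E1 E2
    rw [E1, E2, ← hadd, hm]
    ring
  -- bounds on the two halves
  have hcs : (0:ℝ) < c ^ s := Real.rpow_pos_of_pos hc0 s
  have e3 : c ^ (s+3) = c ^ s * c ^ 3 := by
    have h := Real.rpow_add hc0 s 3
    have h2 : c ^ (3:ℝ) = c ^ (3:ℕ) := by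
      rw [show ((3:ℝ)) = ((3:ℕ):ℝ) by norm_num, Real.rpow_natCast]
    rw [h, h2]
  -- left half
  have hbound1 : |∫ t in a..m, (t-a)^2/2 * g2 t| ≤ c^3/2 * ((1/(s+3)) * Am + N * A) := by
    have hmc : m - a = c := by rw [hm, hc]; ring
    have contg : Continuous (fun t : ℝ => (t-a)^2/2 * (((t-a)/c)^s * Am + ((m-t)/c)^s * A)) := by
      apply Continuous.mul (((continuous_id.sub continuous_const).pow 2).div_const 2)
      exact (((contJ s hs0).comp ((continuous_id.sub continuous_const).div_const c)).mul
          continuous_const).add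
        (((contJ s hs0).comp ((continuous_const.sub continuous_id).div_const c)).mul
          continuous_const)
    have hpt : ∀ᵐ t ∂(volume.restrict (Set.uIoc a m)),
        ‖(t-a)^2/2 * g2 t‖ ≤ (t-a)^2/2 * (((t-a)/c)^s * Am + ((m-t)/c)^s * A) := by
      refine (ae_restrict_mem measurableSet_uIoc).mono (fun t ht => ?_)
      rw [Set.uIoc_of_le ham.le] at ht
      have hta : 0 < t - a := by linarith [ht.1]
      have htm : t ≤ m := ht.2
      set l : ℝ := (t-a)/c with hl
      have hl0 : 0 ≤ l := div_nonneg hta.le hc0.le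
      have hl1 : l ≤ 1 := by rw [hl, div_le_one hc0]; linarith
      have hlt : l * m + (1 - l) * a = t := by
        have h1 : l * m + (1-l) * a = a + l * (m - a) := by ring
        rw [h1, hmc, hl, div_mul_cancel₀ _ hc0.ne']; ring
      have h1l : 1 - l = (m-t)/c := by
        rw [hl, eq_div_iff hc0.ne', sub_mul, one_mul, div_mul_cancel₀ _ hc0.ne']
        linarith
      have hbb := hsc m hmI a haI l ⟨hl0, hl1⟩
      rw [hlt] at hbb
      rw [Real.norm_eq_abs, abs_mul, abs_of_nonneg (by positivity : (0:ℝ) ≤ (t-a)^2/2)]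
      calc (t-a)^2/2 * |g2 t| ≤ (t-a)^2/2 * (l^s * Am + (1-l)^s * A) :=
            mul_le_mul_of_nonneg_left hbb (by positivity)
        _ = (t-a)^2/2 * (((t-a)/c)^s * Am + ((m-t)/c)^s * A) := by rw [h1l, hl]
    have key := intervalIntegral.norm_integral_le_abs_of_norm_le hpt
      (contg.intervalIntegrable a m)
    have hI1 : (∫ t in a..m, (t-a)^(s+2)) = c^(s+3)/(s+3) := by
      have h0 : (∫ t in a..m, (t-a)^(s+2))
          = ∫ t in a..m, (fun u : ℝ => u^(s+2)) (t - a) := by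
        apply integral_congr; intro t _; simp only
      rw [h0, integral_comp_sub_right (fun u : ℝ => u^(s+2)) a, sub_self, hmc, intJ1 hs0]
    have hI2 : (∫ t in a..m, (t-a)^2 * (m-t)^s) = c^(s+3) * N := by
      have h0 : (∫ t in a..m, (t-a)^2*(m-t)^s)
          = ∫ t in a..m, (fun u : ℝ => u^2*(c-u)^s) (t - a) := by
        apply integral_congr; intro t _; simp only
        rw [show c - (t-a) = m - t by rw [← hmc]; ring]
      rw [h0, integral_comp_sub_right (fun u : ℝ => u^2*(c-u)^s) a, sub_self, hmc,
        intJ2' hc0 hs0, hNdef]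
    have i1 : IntervalIntegrable (fun t : ℝ => (t-a)^(s+2)) volume a m :=
      ((contJ (s+2) (by linarith)).comp
        (continuous_id.sub continuous_const)).intervalIntegrable a m
    have i2 : IntervalIntegrable (fun t : ℝ => (t-a)^2 * (m-t)^s) volume a m :=
      (((continuous_id.sub continuous_const).pow 2).mul
        ((contJ s hs0).comp (continuous_const.sub continuous_id))).intervalIntegrable a m
    have hval : (∫ t in a..m, (t-a)^2/2 * (((t-a)/c)^s * Am + ((m-t)/c)^s * A))
        = c^3/2 * ((1/(s+3)) * Am + N * A) := by
      have hcongr : (∫ t in a..m, (t-a)^2/2 * (((t-a)/c)^s * Am + ((m-t)/c)^s * A))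
          = ∫ t in a..m, ((Am/(2*c^s)) * (t-a)^(s+2) + (A/(2*c^s)) * ((t-a)^2 * (m-t)^s)) := by
        apply integral_congr
        intro t ht
        rw [Set.uIcc_of_le ham.le] at ht
        have hta : 0 ≤ t - a := by linarith [ht.1]
        have htm : 0 ≤ m - t := by linarith [ht.2]
        simp only
        rw [Real.div_rpow hta hc0.le, Real.div_rpow htm hc0.le]
        rcases eq_or_lt_of_le hta with h | h
        · rw [← h]
          simp [Real.zero_rpow (by linarith : s+2 ≠ 0), Real.zero_rpow hs0.ne']
        · rw [show s+2 = s+(2:ℝ) by norm_num] at *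
          have : (t-a)^(s+(2:ℝ)) = (t-a)^s * (t-a)^2 := by
            rw [Real.rpow_add h, rpow_two']
          rw [this]
          ring
      rw [hcongr, integral_add ((i1.const_mul _)) ((i2.const_mul _)),
        intervalIntegral.integral_const_mul, intervalIntegral.integral_const_mul, hI1, hI2, e3]
      have h1 : (c:ℝ)^s ≠ 0 := hcs.ne'
      have h2 : s + 3 ≠ 0 := by linarith
      field_simp
    rw [Real.norm_eq_abs, hval] at key
    refine key.trans ?_
    rw [abs_of_nonneg]
    exact mul_nonneg (by positivity)
      (add_nonneg (mul_nonneg hM0 hAm0) (mul_nonneg hN0 hA0))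
  have hbound2 : |∫ t in m..b, (b-t)^2/2 * g2 t| ≤ c^3/2 * ((1/(s+3)) * Am + N * B) := by
    have hbc : b - m = c := by rw [hm, hc]; ring
    have contg : Continuous (fun t : ℝ => (b-t)^2/2 * (((b-t)/c)^s * Am + ((t-m)/c)^s * B)) := by
      apply Continuous.mul (((continuous_const.sub continuous_id).pow 2).div_const 2)
      exact (((contJ s hs0).comp ((continuous_const.sub continuous_id).div_const c)).mul
          continuous_const).add
        (((contJ s hs0).comp ((continuous_id.sub continuous_const).div_const c)).mul
          continuous_const)
    have hpt : ∀ᵐ t ∂(volume.restrict (Set.uIoc m b)),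
        ‖(b-t)^2/2 * g2 t‖ ≤ (b-t)^2/2 * (((b-t)/c)^s * Am + ((t-m)/c)^s * B) := by
      refine (ae_restrict_mem measurableSet_uIoc).mono (fun t ht => ?_)
      rw [Set.uIoc_of_le hmb.le] at ht
      have htb : 0 ≤ b - t := by linarith [ht.2]
      have htm : m < t := ht.1
      set l : ℝ := (b-t)/c with hl
      have hl0 : 0 ≤ l := div_nonneg htb hc0.le
      have hl1 : l ≤ 1 := by rw [hl, div_le_one hc0]; linarith
      have hlt : l * m + (1 - l) * b = t := by
        have h1 : l * m + (1-l) * b = b - l * (b - m) := by ring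
        rw [h1, hbc, hl, div_mul_cancel₀ _ hc0.ne']; ring
      have h1l : 1 - l = (t-m)/c := by
        rw [hl, eq_div_iff hc0.ne', sub_mul, one_mul, div_mul_cancel₀ _ hc0.ne']
        linarith
      have hbb := hsc m hmI b hbI l ⟨hl0, hl1⟩
      rw [hlt] at hbb
      rw [Real.norm_eq_abs, abs_mul, abs_of_nonneg (by positivity : (0:ℝ) ≤ (b-t)^2/2)]
      calc (b-t)^2/2 * |g2 t| ≤ (b-t)^2/2 * (l^s * Am + (1-l)^s * B) :=
            mul_le_mul_of_nonneg_left hbb (by positivity)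
        _ = (b-t)^2/2 * (((b-t)/c)^s * Am + ((t-m)/c)^s * B) := by rw [h1l, hl]
    have key := intervalIntegral.norm_integral_le_abs_of_norm_le hpt
      (contg.intervalIntegrable m b)
    have hI1 : (∫ t in m..b, (b-t)^(s+2)) = c^(s+3)/(s+3) := by
      have h0 : (∫ t in m..b, (b-t)^(s+2))
          = ∫ t in m..b, (fun u : ℝ => u^(s+2)) (b - t) := by
        apply integral_congr; intro t _; simp only
      rw [h0, integral_comp_sub_left (fun u : ℝ => u^(s+2)) b, sub_self, hbc, intJ1 hs0]
    have hI2 : (∫ t in m..b, (b-t)^2 * (t-m)^s) = c^(s+3) * N := by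
      have h0 : (∫ t in m..b, (b-t)^2*(t-m)^s)
          = ∫ t in m..b, (fun u : ℝ => (c-u)^2*u^s) (t - m) := by
        apply integral_congr; intro t _; simp only
        rw [show c - (t-m) = b - t by rw [← hbc]; ring]
      rw [h0, integral_comp_sub_right (fun u : ℝ => (c-u)^2*u^s) m, sub_self, hbc,
        intJ2 hc0 hs0, hNdef]
    have i1 : IntervalIntegrable (fun t : ℝ => (b-t)^(s+2)) volume m b :=
      ((contJ (s+2) (by linarith)).comp
        (continuous_const.sub continuous_id)).intervalIntegrable m b
    have i2 : IntervalIntegrable (fun t : ℝ => (b-t)^2 * (t-m)^s) volume m b :=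
      (((continuous_const.sub continuous_id).pow 2).mul
        ((contJ s hs0).comp (continuous_id.sub continuous_const))).intervalIntegrable m b
    have hval : (∫ t in m..b, (b-t)^2/2 * (((b-t)/c)^s * Am + ((t-m)/c)^s * B))
        = c^3/2 * ((1/(s+3)) * Am + N * B) := by
      have hcongr : (∫ t in m..b, (b-t)^2/2 * (((b-t)/c)^s * Am + ((t-m)/c)^s * B))
          = ∫ t in m..b, ((Am/(2*c^s)) * (b-t)^(s+2) + (B/(2*c^s)) * ((b-t)^2 * (t-m)^s)) := by
        apply integral_congr
        intro t ht
        rw [Set.uIcc_of_le hmb.le] at ht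
        have htb : 0 ≤ b - t := by linarith [ht.2]
        have htm : 0 ≤ t - m := by linarith [ht.1]
        simp only
        rw [Real.div_rpow htb hc0.le, Real.div_rpow htm hc0.le]
        rcases eq_or_lt_of_le htb with h | h
        · rw [← h]
          simp [Real.zero_rpow (by linarith : s+2 ≠ 0), Real.zero_rpow hs0.ne']
        · rw [show s+2 = s+(2:ℝ) by norm_num] at *
          have : (b-t)^(s+(2:ℝ)) = (b-t)^s * (b-t)^2 := by
            rw [Real.rpow_add h, rpow_two']
          rw [this]
          ring
      rw [hcongr, integral_add ((i1.const_mul _)) ((i2.const_mul _)),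
        intervalIntegral.integral_const_mul, intervalIntegral.integral_const_mul, hI1, hI2, e3]
      have h1 : (c:ℝ)^s ≠ 0 := hcs.ne'
      have h2 : s + 3 ≠ 0 := by linarith
      field_simp
    rw [Real.norm_eq_abs, hval] at key
    refine key.trans ?_
    rw [abs_of_nonneg]
    exact mul_nonneg (by positivity)
      (add_nonneg (mul_nonneg hM0 hAm0) (mul_nonneg hN0 hB0))
  constructor
  · have hrw : (1/(b-a)) * (∫ t in a..b, f t) - f m
        = (1/(b-a)) * ((∫ t in a..b, f t) - (b-a) * f m) := by
      have hba : (b - a) ≠ 0 := by linarith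
      have h0 : (1/(b-a)) * ((b-a) * f m) = f m := by
        rw [← mul_assoc, one_div, inv_mul_cancel₀ hba, one_mul]
      rw [mul_sub, h0]
    rw [hrw, ← hKey, abs_mul, abs_of_pos (one_div_pos.mpr (by linarith : (0:ℝ) < b - a))]
    have habs : |(∫ t in a..m, (t-a)^2/2 * g2 t) + (∫ t in m..b, (b-t)^2/2 * g2 t)|
        ≤ c^3/2 * ((1/(s+3)) * Am + N * A) + c^3/2 * ((1/(s+3)) * Am + N * B) :=
      (abs_add_le _ _).trans (add_le_add hbound1 hbound2)
    have hc3 : c^3 = (b-a)^3/8 := by rw [hc]; ring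
    have hstep : (1/(b-a)) * (c^3/2 * ((1/(s+3)) * Am + N * A)
          + c^3/2 * ((1/(s+3)) * Am + N * B))
        = ((b-a)^2/16) * (2 * (1/(s+3)) * Am + N * (A + B)) := by
      have hba : b - a ≠ 0 := by linarith
      rw [hc3]
      field_simp
      ring
    calc (1/(b-a)) * |(∫ t in a..m, (t-a)^2/2 * g2 t) + (∫ t in m..b, (b-t)^2/2 * g2 t)|
        ≤ (1/(b-a)) * (c^3/2 * ((1/(s+3)) * Am + N * A)
            + c^3/2 * ((1/(s+3)) * Am + N * B)) := by
          exact mul_le_mul_of_nonneg_left habs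
            (one_div_pos.mpr (by linarith : (0:ℝ) < b - a)).le
      _ = ((b-a)^2/16) * (2 * (1/(s+3)) * Am + N * (A + B)) := hstep
      _ ≤ ((b-a)^2/8) * (2 * (1/(s+3)) * Am + N * (A + B)) := by
          apply mul_le_mul_of_nonneg_right _ (by positivity)
          nlinarith [sq_nonneg (b-a)]
  · have hmid := hsc a haI b hbI (1/2) ⟨by norm_num, by norm_num⟩
    rw [show (1/2:ℝ)*a + (1-1/2)*b = m by rw [hm]; ring,
      show (1:ℝ) - 1/2 = 1/2 by norm_num] at hmid
    have h2s : (2:ℝ)^(1-s) = 2 * (1/2:ℝ)^s := by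
      rw [Real.rpow_sub (by norm_num), Real.rpow_one,
        show (1/2:ℝ) = 2⁻¹ by norm_num, Real.inv_rpow (by norm_num)]
      rw [div_eq_mul_inv]
    have hhalf : (0:ℝ) ≤ (1/2:ℝ)^s := Real.rpow_nonneg (by norm_num) s
    have key : 2 * (1/(s+3)) * Am + N * (A + B)
        ≤ ((2:ℝ)^(1-s) * (1/(s+3)) + N) * (A + B) := by
      have h1 : Am ≤ (1/2:ℝ)^s * (A + B) := by linarith
      have h2 : 2 * (1/(s+3)) * Am ≤ 2 * (1/(s+3)) * ((1/2:ℝ)^s * (A + B)) :=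
        mul_le_mul_of_nonneg_left h1 (by linarith)
      calc 2 * (1/(s+3)) * Am + N * (A + B)
          ≤ 2 * (1/(s+3)) * ((1/2:ℝ)^s * (A + B)) + N * (A + B) := by linarith
        _ = ((2:ℝ)^(1-s) * (1/(s+3)) + N) * (A + B) := by rw [h2s]; ring
    calc ((b-a)^2/8) * (2 * (1/(s+3)) * Am + N * (A + B))
        ≤ ((b-a)^2/8) * (((2:ℝ)^(1-s) * (1/(s+3)) + N) * (A + B)) :=
          mul_le_mul_of_nonneg_left key (by positivity)
      _ = ((b-a)^2/8) * ((2:ℝ)^(1-s) * (1/(s+3)) + N) * (A + B) := by ring
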